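/- Let n and m be natural numbers. Form the concrete lax sum L of the sequence C^0_m → C^1_m → ... → C^n_m, where C^j_m = (Fin j → Fin (m+1)) with the pointwise order and each map C^j_m → C^{j+1}_m prepends a 0 coordinate: L is the sigma type of pairs (j, x) with j ∈ Fin (n+1) and x : Fin j → Fin (m+1), ordered by (j, x) ≤ (l, y) iff j ≤ l and the tuple obtained from x by prepending l − j zeros is ≤ y pointwise. Then L is order-isomorphic to the subposet of (Fin n → Fin (m+2)) (pointwise order) consisting of those tuples x such that for every index i with i+1 < n, if x(i+1) = 0 then x(i) = 0. -/
import Mathlib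

set_option maxHeartbeats 1000000

/-- Prepending `l - j` zeros to a tuple `x : Fin j → Fin (m+1)`, producing a tuple
of length `l` (when `j ≤ l`; positions `< l - j` are `0`). -/
def prependZeros {m j l : ℕ} (x : Fin j → Fin (m + 1)) : Fin l → Fin (m + 1) :=
  fun i => if hi : (i : ℕ) < l - j then 0
    else x ⟨(i : ℕ) - (l - j), by have := i.isLt; omega⟩

private def Ftup {n m : ℕ} (a : Σ j : Fin (n + 1), (Fin (j : ℕ) → Fin (m + 1))) :
    Fin n → Fin (m + 2) :=
  fun i => if hi : (i : ℕ) < n - (a.1 : ℕ) then 0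
    else (a.2 ⟨(i : ℕ) - (n - (a.1 : ℕ)), by
      have h1 := i.isLt; have h2 := a.1.isLt; omega⟩).succ

private lemma fin_app_congr {m j : ℕ} (x : Fin j → Fin (m + 1)) {a b : ℕ}
    {ha : a < j} {hb : b < j} (h : a = b) : x ⟨a, ha⟩ = x ⟨b, hb⟩ := by subst h; rfl

private lemma ftup_prop {n m : ℕ} (a : Σ j : Fin (n + 1), (Fin (j : ℕ) → Fin (m + 1)))
    (i : ℕ) (h : i + 1 < n) (hz : Ftup a ⟨i + 1, h⟩ = 0) :
    Ftup a ⟨i, Nat.lt_of_succ_lt h⟩ = 0 := by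
  simp only [Ftup] at hz ⊢
  split at hz
  · rename_i hi
    rw [dif_pos (by omega)]
  · exact absurd hz (Fin.succ_ne_zero _)

private lemma ftup_fst_le {n m : ℕ} (a b : Σ j : Fin (n + 1), (Fin (j : ℕ) → Fin (m + 1)))
    (hab : ∀ i, Ftup a i ≤ Ftup b i) : (a.1 : ℕ) ≤ (b.1 : ℕ) := by
  by_contra hlt
  push_neg at hlt
  have ha := a.1.isLt
  have hb := b.1.isLt
  have hin : n - (a.1 : ℕ) < n := by omega
  have h1 := hab ⟨n - (a.1 : ℕ), hin⟩
  simp only [Ftup] at h1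
  rw [dif_neg (by omega), dif_pos (by omega)] at h1
  exact Fin.succ_ne_zero _ (Fin.le_zero_iff.mp h1)

private lemma ftup_inj {n m : ℕ} : Function.Injective (Ftup (n := n) (m := m)) := by
  intro a b hF
  have h1 : (a.1 : ℕ) = (b.1 : ℕ) :=
    le_antisymm (ftup_fst_le a b (fun i => (hF ▸ le_refl _)))
      (ftup_fst_le b a (fun i => (hF ▸ le_refl _)))
  obtain ⟨j, x⟩ := a
  obtain ⟨l, y⟩ := b
  have : j = l := Fin.ext h1
  subst this
  simp only [Sigma.mk.inj_iff, heq_eq_eq, true_and]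
  funext k
  have hj := j.isLt
  have hk := k.isLt
  have hkn : (k : ℕ) + (n - (j : ℕ)) < n := by omega
  have h2 := congrFun hF ⟨(k : ℕ) + (n - (j : ℕ)), hkn⟩
  simp only [Ftup] at h2
  rw [dif_neg (show ¬((k : ℕ) + (n - (j : ℕ)) < n - (j : ℕ)) by omega)] at h2
  split at h2
  · rename_i hc; omega
  have h3 := Fin.succ_injective _ h2
  exact (fin_app_congr x (ha := k.isLt) (by omega)).trans
    (h3.trans (fin_app_congr y (hb := k.isLt) (by omega)))

private lemma ftup_surj {n m : ℕ} (x : Fin n → Fin (m + 2))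
    (hx : ∀ (i : ℕ) (h : i + 1 < n), x ⟨i + 1, h⟩ = 0 → x ⟨i, Nat.lt_of_succ_lt h⟩ = 0) :
    ∃ a : Σ j : Fin (n + 1), (Fin (j : ℕ) → Fin (m + 1)), Ftup a = x := by
  classical
  have hex : ∃ i, ∀ h : i < n, x ⟨i, h⟩ ≠ 0 := ⟨n, fun h => absurd h (lt_irrefl n)⟩
  set k := Nat.find hex with hk
  have hkspec := Nat.find_spec hex
  have hkn : k ≤ n := Nat.find_le (fun h => absurd h (lt_irrefl n))
  have hz : ∀ (i : ℕ) (h : i < n), i < k → x ⟨i, h⟩ = 0 := by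
    intro i h hik
    have := Nat.find_min hex hik
    push_neg at this
    obtain ⟨h', hz⟩ := this
    simpa using hz
  have hnz : ∀ (i : ℕ) (h : i < n), k ≤ i → x ⟨i, h⟩ ≠ 0 := by
    have key : ∀ d (h : k + d < n), x ⟨k + d, h⟩ ≠ 0 := by
      intro d
      induction d with
      | zero => intro h; exact hkspec h
      | succ d ih =>
        intro h hzero
        exact ih (by omega) (hx (k + d) (by omega) hzero)
    intro i h hik
    have := key (i - k) (by omega)
    exact fun hc => this ((fin_app_congr x (ha := by omega) (by omega)).trans hc)
  refine ⟨⟨⟨n - k, by omega⟩, fun i =>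
    (x ⟨(i : ℕ) + k, by have : (i : ℕ) < n - k := i.isLt; omega⟩).pred
      (hnz _ _ (by omega))⟩, ?_⟩
  funext i
  simp only [Ftup]
  have hi := i.isLt
  split
  · rename_i h
    exact (hz i i.isLt (by omega)).symm
  · rename_i h
    rw [Fin.succ_pred]
    exact fin_app_congr x (by omega)

private lemma ftup_iff {n m : ℕ} (j l : Fin (n + 1)) (x : Fin (j : ℕ) → Fin (m + 1))
    (y : Fin (l : ℕ) → Fin (m + 1)) :
    ((j : ℕ) ≤ (l : ℕ) ∧ prependZeros x ≤ y) ↔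
      ∀ i, Ftup (⟨j, x⟩ : Σ j : Fin (n + 1), (Fin (j : ℕ) → Fin (m + 1))) i ≤
        Ftup ⟨l, y⟩ i := by
  have hj := j.isLt
  have hl := l.isLt
  constructor
  · rintro ⟨hjl, hxy⟩ i
    have hi := i.isLt
    simp only [Ftup]
    split
    · exact Fin.zero_le _
    · rename_i h1
      rw [dif_neg (by omega)]
      rw [Fin.succ_le_succ_iff]
      have hkl : (i : ℕ) - (n - (l : ℕ)) < (l : ℕ) := by omega
      have h2 := hxy ⟨(i : ℕ) - (n - (l : ℕ)), hkl⟩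
      simp only [prependZeros] at h2
      rw [dif_neg (by omega)] at h2
      exact le_of_eq_of_le (fin_app_congr x (by omega)) h2
  · intro h
    have hjl : (j : ℕ) ≤ (l : ℕ) := ftup_fst_le ⟨j, x⟩ ⟨l, y⟩ h
    refine ⟨hjl, fun k => ?_⟩
    have hk := k.isLt
    simp only [prependZeros]
    split
    · exact Fin.zero_le _
    · rename_i hkl
      have hin : (k : ℕ) + (n - (l : ℕ)) < n := by omega
      have h1 := h ⟨(k : ℕ) + (n - (l : ℕ)), hin⟩
      simp only [Ftup] at h1
      rw [dif_neg (by omega), dif_neg (by omega)] at h1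
      rw [Fin.succ_le_succ_iff] at h1
      exact le_of_eq_of_le (fin_app_congr x (ha := by omega) (by omega))
        (le_of_le_of_eq h1 (fin_app_congr y (hb := hk) (by omega)))

/-- The concrete lax sum of `C^0_m → C^1_m → ⋯ → C^n_m` (maps prepending a `0`
coordinate), i.e. the sigma type `Σ j : Fin (n+1), Fin j → Fin (m+1)` ordered by
`(j, x) ≤ (l, y)` iff `j ≤ l` and the tuple obtained from `x` by prepending `l - j`
zeros is `≤ y` pointwise, is order-isomorphic to the subposet of `Fin n → Fin (m+2)`
(pointwise order) of tuples with `x (i+1) = 0 → x i = 0`. -/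
theorem stmt_10 (n m : ℕ) :
    ∃ e : (Σ j : Fin (n + 1), (Fin (j : ℕ) → Fin (m + 1))) ≃
        {x : Fin n → Fin (m + 2) //
          ∀ (i : ℕ) (h : i + 1 < n), x ⟨i + 1, h⟩ = 0 → x ⟨i, Nat.lt_of_succ_lt h⟩ = 0},
      ∀ a b : Σ j : Fin (n + 1), (Fin (j : ℕ) → Fin (m + 1)),
        ((a.1 : ℕ) ≤ (b.1 : ℕ) ∧ prependZeros a.2 ≤ b.2) ↔ e a ≤ e b := by
  refine ⟨Equiv.ofBijective (fun a => ⟨Ftup a, ftup_prop a⟩)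
    ⟨fun a b hab => ftup_inj (congrArg Subtype.val hab),
     fun y => by
       obtain ⟨a, ha⟩ := ftup_surj y.1 y.2
       exact ⟨a, Subtype.ext ha⟩⟩, ?_⟩
  rintro ⟨j, x⟩ ⟨l, y⟩
  exact (ftup_iff j l x y).trans Iff.rfl
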